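/- For any edge e between vertices a and b in a finite connected multigraph G, the effective resistance R_{ab} equals the probability that e is contained in a uniformly random spanning tree of G; equivalently, R_{ab} = (number of spanning trees of G containing e) / (number of spanning trees of G). -/

import Mathlib

set_option maxHeartbeats 2000000
set_option linter.unusedSectionVars false


/-- Net current out of vertex `c` for a current assignment `i` on oriented edges. -/
def netFlow {V E : Type} [Fintype E] [DecidableEq V] (s t : E → V) (i : E → ℝ) (c : V) : ℝ :=
  (∑ e : E, if s e = c then i e else 0) - (∑ e : E, if t e = c then i e else 0)

/-- `(v, i)` is the electrical flow of one unit of current from `a` to `b` in the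
multigraph `(s, t)` with unit resistance on every edge; the effective resistance
`R_{ab}` is then `v a − v b`. -/
def IsUnitFlow {V E : Type} [Fintype E] [DecidableEq V] (s t : E → V) (a b : V)
    (v : V → ℝ) (i : E → ℝ) : Prop :=
  (∀ c : V, netFlow s t i c = (if c = a then 1 else 0) - (if c = b then 1 else 0)) ∧
  (∀ e : E, v (s e) - v (t e) = i e)

/-- Adjacency using only edges in `T`. -/
def MAdjOn {V E : Type} (s t : E → V) (T : Finset E) (x y : V) : Prop :=
  ∃ e ∈ T, (s e = x ∧ t e = y) ∨ (s e = y ∧ t e = x)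

/-- Connectivity of a multigraph. -/
def MConnected {V E : Type} [Fintype E] (s t : E → V) : Prop :=
  Nonempty V ∧ ∀ x y : V, Relation.ReflTransGen (MAdjOn s t Finset.univ) x y

/-- `T` is (the edge set of) a spanning tree of the multigraph `(s, t)`:
it connects all vertices and has exactly `|V| − 1` edges. -/
def IsSpanningTree {V E : Type} [Fintype V] (s t : E → V) (T : Finset E) : Prop :=
  (∀ x y : V, Relation.ReflTransGen (MAdjOn s t T) x y) ∧ T.card + 1 = Fintype.card V



open Matrix Finset

section Pivot

variable {W : Type} [Fintype W] [DecidableEq W]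

/-- Expansion of a determinant along a row with a single nonzero entry on the diagonal. -/
lemma det_pivot (M : Matrix W W ℝ) (w₀ : W) (c : ℝ)
    (h : ∀ w, M w₀ w = if w = w₀ then c else 0) :
    M.det = c * (Matrix.of fun i j : {w : W // w ≠ w₀} => M ↑i ↑j).det := by
  classical
  haveI : Unique {w : W // w = w₀} := ⟨⟨⟨w₀, rfl⟩⟩, fun x => Subtype.ext x.2⟩
  let e := Equiv.sumCompl (fun w : W => w = w₀)
  have hdet : M.det = (M.submatrix e e).det := (Matrix.det_submatrix_equiv_self e M).symm
  have hblock : M.submatrix e e =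
      Matrix.fromBlocks (Matrix.of fun _ _ : {w : W // w = w₀} => c) 0
        (Matrix.of fun (i : {w : W // w ≠ w₀}) (j : {w : W // w = w₀}) => M ↑i ↑j)
        (Matrix.of fun i j : {w : W // w ≠ w₀} => M ↑i ↑j) := by
    ext i j
    cases i with
    | inl i =>
      cases j with
      | inl j =>
        simp only [e, submatrix_apply, Matrix.fromBlocks_apply₁₁, Matrix.of_apply,
          Equiv.sumCompl_apply_inl]
        rw [show (↑i : W) = w₀ from i.2, h, if_pos j.2]
      | inr j =>
        simp only [e, submatrix_apply, Matrix.fromBlocks_apply₁₂, Matrix.zero_apply,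
          Equiv.sumCompl_apply_inl, Equiv.sumCompl_apply_inr]
        rw [show (↑i : W) = w₀ from i.2, h, if_neg j.2]
    | inr i =>
      cases j with
      | inl j => simp [e, Equiv.sumCompl]
      | inr j => simp [e, Equiv.sumCompl]
  rw [hdet, hblock, Matrix.det_fromBlocks_zero₁₂, Matrix.det_unique]
  simp

end Pivot

section TU

/-- A row with at most one `+1` and at most one `−1`. -/
def IncRow {W : Type} [DecidableEq W] (x y : Option W) : W → ℝ :=
  fun w => (if x = some w then 1 else 0) - (if y = some w then 1 else 0)

lemma tu_aux (n : ℕ) : ∀ (W : Type) [Fintype W] [DecidableEq W], Fintype.card W = n →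
    ∀ M : Matrix W W ℝ, (∀ i, ∃ x y, M i = IncRow x y) →
      M.det ^ 2 = 0 ∨ M.det ^ 2 = 1 := by
  induction n with
  | zero =>
    intro W _ _ hW M _
    haveI : IsEmpty W := Fintype.card_eq_zero_iff.mp hW
    right; rw [Matrix.det_isEmpty]; norm_num
  | succ n ih =>
    intro W _ _ hW M hM
    by_cases hz : ∃ i, M i = 0
    · obtain ⟨i, hi⟩ := hz
      left
      rw [Matrix.det_eq_zero_of_row_eq_zero i (fun j => by rw [hi]; rfl)]
      norm_num
    · push_neg at hz
      by_cases hp : ∃ i₀ k₀ c, (c = 1 ∨ c = -1) ∧ ∀ w, M i₀ w = if w = k₀ then c else 0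
      · obtain ⟨i₀, k₀, c, hc, hrow⟩ := hp
        -- move row i₀ to position k₀
        set σ : Equiv.Perm W := Equiv.swap k₀ i₀ with hσ
        set N : Matrix W W ℝ := M.submatrix σ id with hN
        have hdetN : N.det = Equiv.Perm.sign σ * M.det := Matrix.det_permute σ M
        have hNrow : ∀ w, N k₀ w = if w = k₀ then c else 0 := by
          intro w
          simp only [hN, Matrix.submatrix_apply, id_eq, hσ, Equiv.swap_apply_left]
          exact hrow w
        have hminor := det_pivot N k₀ c hNrow
        -- the minor satisfies the hypothesis
        set D := Matrix.of fun i j : {w : W // w ≠ k₀} => N ↑i ↑j with hD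
        have hDhyp : ∀ i, ∃ x y, D i = IncRow x y := by
          intro i
          obtain ⟨x, y, hxy⟩ := hM (σ ↑i)
          have hres : ∀ (z : Option W),
              ∃ z' : Option {w : W // w ≠ k₀}, ∀ w : {w : W // w ≠ k₀},
                (if z = some ↑w then (1:ℝ) else 0) = (if z' = some w then (1:ℝ) else 0) := by
            intro z
            match z with
            | none => exact ⟨none, fun w => by simp⟩
            | some k =>
              by_cases hk : k = k₀
              · refine ⟨none, fun w => ?_⟩
                subst hk
                simp only [Option.some.injEq]
                rw [if_neg (fun h => w.2 h.symm)]
                simp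
              · refine ⟨some ⟨k, hk⟩, fun w => ?_⟩
                simp [Subtype.ext_iff, eq_comm]
          obtain ⟨x', hx'⟩ := hres x
          obtain ⟨y', hy'⟩ := hres y
          refine ⟨x', y', funext fun w => ?_⟩
          have : D i w = M (σ ↑i) ↑w := rfl
          rw [this, hxy]
          simp only [IncRow, hx' w, hy' w]
        have hcard : Fintype.card {w : W // w ≠ k₀} = n := by
          have h1 := Fintype.card_subtype_compl (fun w : W => w = k₀)
          have h2 : Fintype.card {w : W // w ≠ k₀} = Fintype.card {w : W // ¬ w = k₀} :=
            Fintype.card_congr (Equiv.subtypeEquivRight (fun _ => Iff.rfl))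
          simp only [Fintype.card_subtype_eq] at h1
          omega
        have hind := ih {w : W // w ≠ k₀} hcard D hDhyp
        have hsign : (Equiv.Perm.sign σ : ℝ) ^ 2 = 1 := by
          rcases Int.units_eq_one_or (Equiv.Perm.sign σ) with h | h <;> rw [h] <;> norm_num
        have hc2 : c ^ 2 = 1 := by rcases hc with h | h <;> rw [h] <;> norm_num
        have : M.det ^ 2 = D.det ^ 2 := by
          have h1 : (Equiv.Perm.sign σ : ℝ) * M.det = c * D.det := by
            rw [← hdetN, hminor]
          have h2 := congrArg (· ^ 2) h1
          simp only [mul_pow] at h2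
          rw [hsign, hc2, one_mul, one_mul] at h2
          exact h2
        rw [this]; exact hind
      · -- every row has two nonzero entries; columns sum to zero
        left
        have hones : M *ᵥ (fun _ => (1:ℝ)) = 0 := by
          funext i
          obtain ⟨x, y, hxy⟩ := hM i
          -- x and y must both be `some` and distinct
          obtain ⟨kx, hkx⟩ : ∃ kx, x = some kx := by
            match x, y with
            | some kx, _ => exact ⟨kx, rfl⟩
            | none, none =>
              exfalso; exact hz i (by rw [hxy]; funext w; simp [IncRow])
            | none, some ky =>
              exfalso
              refine hp ⟨i, ky, -1, Or.inr rfl, fun w => ?_⟩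
              rw [hxy]
              unfold IncRow
              by_cases h : w = ky
              · subst h; simp
              · have h2 : ¬ ((some ky : Option W) = some w) :=
                  fun hh => h (Option.some.inj hh).symm
                simp [h, h2]
          obtain ⟨ky, hky⟩ : ∃ ky, y = some ky := by
            match y with
            | some ky => exact ⟨ky, rfl⟩
            | none =>
              exfalso
              refine hp ⟨i, kx, 1, Or.inl rfl, fun w => ?_⟩
              rw [hxy, hkx]
              unfold IncRow
              by_cases h : w = kx
              · subst h; simp
              · have h2 : ¬ ((some kx : Option W) = some w) :=
                  fun hh => h (Option.some.inj hh).symm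
                simp [h, h2]
          have hne : kx ≠ ky := by
            intro h
            subst h
            exact hz i (by rw [hxy, hkx, hky]; funext w; simp [IncRow])
          have : (M *ᵥ (fun _ => (1:ℝ))) i = ∑ w, M i w := by
            simp [Matrix.mulVec, dotProduct]
          rw [this, hxy, hkx, hky]
          simp only [IncRow, Option.some.injEq, Finset.sum_sub_distrib]
          rw [Finset.sum_ite_eq Finset.univ kx (fun _ => (1:ℝ))]
          rw [Finset.sum_ite_eq Finset.univ ky (fun _ => (1:ℝ))]
          simp
        have : ∃ v ≠ 0, M *ᵥ v = 0 := by
          refine ⟨fun _ => 1, ?_, hones⟩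
          haveI : Nonempty W := Fintype.card_pos_iff.mp (by omega)
          intro h
          have := congrFun h (Classical.arbitrary W)
          norm_num at this
        rw [(Matrix.exists_mulVec_eq_zero_iff).mp this]
        norm_num

end TU
section CB

open Matrix Finset

variable {E W : Type} [Fintype E] [Fintype W] [DecidableEq E] [DecidableEq W]

noncomputable def tEquiv (T : Finset E) (h : T.card = Fintype.card W) : W ≃ ↥T :=
  Fintype.equivOfCardEq (by rw [Fintype.card_coe, h])

noncomputable def rdet (X : Matrix E W ℝ) (T : Finset E) : ℝ :=
  if h : T.card = Fintype.card W then
    (Matrix.of fun w w' : W => X ((tEquiv T h) w : E) w').det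
  else 0

lemma rdet_pos (X : Matrix E W ℝ) (T : Finset E) (h : T.card = Fintype.card W) :
    rdet X T = (Matrix.of fun w w' : W => X ((tEquiv T h) w : E) w').det := dif_pos h

lemma cauchy_binet_sq (X : Matrix E W ℝ) :
    (Xᵀ * X).det = ∑ T ∈ Finset.univ.filter (fun T : Finset E => T.card = Fintype.card W),
      (rdet X T) ^ 2 := by
  classical
  have h1 : (Xᵀ * X).det
      = ∑ p : W → E, (∏ w, X (p w) w) * (Matrix.of fun w w' : W => X (p w) w').det := by
    have hM : (Xᵀ * X) = Matrix.of fun w => ∑ e : E, X e w • (fun w' : W => X e w') := by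
      ext w w'
      simp [Matrix.mul_apply, Matrix.transpose_apply, Finset.sum_apply]
    rw [hM]
    have key := (Matrix.detRowAlternating (R := ℝ) (n := W)).toMultilinearMap.map_sum
      (g := fun (w : W) (e : E) => X e w • (fun w' : W => X e w'))
    have h0 : (Matrix.of fun w => ∑ e : E, X e w • (fun w' : W => X e w')).det
        = (Matrix.detRowAlternating (R := ℝ) (n := W)).toMultilinearMap
            (fun w => ∑ e : E, X e w • (fun w' : W => X e w')) := rfl
    rw [h0, key]
    refine Finset.sum_congr rfl fun p _ => ?_
    rw [MultilinearMap.map_smul_univ]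
    rfl
  rw [h1]
  have h2 : ∑ p : W → E, (∏ w, X (p w) w) * (Matrix.of fun w w' : W => X (p w) w').det
      = ∑ p ∈ Finset.univ.filter (fun p : W → E => Function.Injective p),
          (∏ w, X (p w) w) * (Matrix.of fun w w' : W => X (p w) w').det := by
    symm
    apply Finset.sum_filter_of_ne
    intro p _ hne
    by_contra hinj
    simp only [Function.Injective] at hinj
    push_neg at hinj
    obtain ⟨w, w', hpe, hww⟩ := hinj
    apply hne
    have hroweq : (Matrix.of fun w w' : W => X (p w) w') w
        = (Matrix.of fun w w' : W => X (p w) w') w' := by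
      funext w''
      simp only [Matrix.of_apply]
      rw [hpe]
    rw [Matrix.det_zero_of_row_eq hww hroweq, mul_zero]
  rw [h2]
  have hmapsto : ∀ p ∈ Finset.univ.filter (fun p : W → E => Function.Injective p),
      Finset.univ.image p ∈ Finset.univ.filter (fun T : Finset E => T.card = Fintype.card W) := by
    intro p hp
    rw [Finset.mem_filter] at hp ⊢
    exact ⟨Finset.mem_univ _, by rw [Finset.card_image_of_injective _ hp.2, Finset.card_univ]⟩
  rw [← Finset.sum_fiberwise_of_maps_to hmapsto
    (fun p => (∏ w, X (p w) w) * (Matrix.of fun w w' : W => X (p w) w').det)]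
  refine Finset.sum_congr rfl fun T hT => ?_
  rw [Finset.mem_filter] at hT
  have hTc : T.card = Fintype.card W := hT.2
  set q : W ≃ ↥T := tEquiv T hTc with hq
  set p₀ : W → E := fun w => ((q w : ↥T) : E) with hp₀
  have hp₀inj : Function.Injective p₀ := fun w w' h => q.injective (Subtype.ext h)
  have hp₀im : Finset.univ.image p₀ = T := by
    ext e
    constructor
    · intro he
      obtain ⟨w, _, rfl⟩ := Finset.mem_image.mp he
      exact (q w).2
    · intro he
      exact Finset.mem_image.mpr ⟨q.symm ⟨e, he⟩, Finset.mem_univ _, by simp [hp₀]⟩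
  set D₀ : Matrix W W ℝ := Matrix.of fun w w' : W => X (p₀ w) w' with hD₀
  have hrd : rdet X T = D₀.det := rdet_pos X T hTc
  have hbij : ∑ σ : Equiv.Perm W,
        (∏ w, X (p₀ (σ w)) w) * (Matrix.of fun w w' : W => X (p₀ (σ w)) w').det
      = ∑ p ∈ (Finset.univ.filter (fun p : W → E => Function.Injective p)).filter
          (fun p => Finset.univ.image p = T),
          (∏ w, X (p w) w) * (Matrix.of fun w w' : W => X (p w) w').det := by
    refine Finset.sum_bij (i := fun σ _ => p₀ ∘ σ) ?_ ?_ ?_ ?_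
    · intro σ _
      rw [Finset.mem_filter, Finset.mem_filter]
      refine ⟨⟨Finset.mem_univ _, hp₀inj.comp σ.injective⟩, ?_⟩
      rw [show Finset.univ.image (p₀ ∘ σ) = (Finset.univ.image ⇑σ).image p₀ from
        (Finset.image_image).symm, Finset.image_univ_equiv, hp₀im]
    · intro σ₁ _ σ₂ _ h
      ext w
      exact q.injective (Subtype.ext (congrFun h w))
    · intro p hp
      rw [Finset.mem_filter, Finset.mem_filter] at hp
      have hpinj : Function.Injective p := hp.1.2
      have hpim : Finset.univ.image p = T := hp.2
      have hmem : ∀ w, p w ∈ T := by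
        intro w
        rw [← hpim]
        exact Finset.mem_image_of_mem p (Finset.mem_univ w)
      have hbij2 : Function.Bijective (fun w => q.symm ⟨p w, hmem w⟩) := by
        rw [← Finite.injective_iff_bijective]
        intro w w' hww
        exact hpinj (congrArg Subtype.val (q.symm.injective hww))
      refine ⟨Equiv.ofBijective _ hbij2, Finset.mem_univ _, ?_⟩
      funext w
      show p₀ (q.symm ⟨p w, hmem w⟩) = p w
      rw [hp₀]
      simp
    · intro σ _
      rfl
  rw [← hbij]
  have hsum : ∑ σ : Equiv.Perm W,
      (∏ w, X (p₀ (σ w)) w) * (Matrix.of fun w w' : W => X (p₀ (σ w)) w').det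
      = (∑ σ : Equiv.Perm W, Equiv.Perm.sign σ • ∏ w, D₀ (σ w) w) * D₀.det := by
    rw [Finset.sum_mul]
    refine Finset.sum_congr rfl fun σ _ => ?_
    have h4 : (Matrix.of fun w w' : W => X (p₀ (σ w)) w') = D₀.submatrix σ id := rfl
    rw [h4, Matrix.det_permute]
    have h5 : ∀ w, D₀ (σ w) w = X (p₀ (σ w)) w := fun w => rfl
    simp only [h5, Units.smul_def, zsmul_eq_mul]
    push_cast
    ring
  rw [hsum, ← Matrix.det_apply, hrd]
  ring

lemma sum_sq_filter (X : Matrix E W ℝ) (h01 : ∀ T, (rdet X T) ^ 2 = 0 ∨ (rdet X T) ^ 2 = 1) :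
    ∑ T ∈ Finset.univ.filter (fun T : Finset E => T.card = Fintype.card W), (rdet X T) ^ 2
      = ((Finset.univ.filter (fun T : Finset E =>
          T.card = Fintype.card W ∧ (rdet X T) ^ 2 = 1)).card : ℝ) := by
  classical
  rw [← Finset.filter_filter, Finset.card_filter]
  push_cast
  refine Finset.sum_congr rfl fun T _ => ?_
  rcases h01 T with h | h
  · rw [h]
    norm_num
  · rw [h]
    norm_num

end CB
section Graph

open Matrix Finset

variable {V E : Type} [Fintype V] [Fintype E] [DecidableEq V] [DecidableEq E]

def dvec (x y : V) : V → ℝ := fun c => (if x = c then 1 else 0) - (if y = c then 1 else 0)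

def rvec (s t : E → V) (e : E) : V → ℝ := dvec (s e) (t e)

lemma sum_dvec_mul (x y : V) (f : V → ℝ) : ∑ c, dvec x y c * f c = f x - f y := by
  unfold dvec
  simp [sub_mul, Finset.sum_sub_distrib, ite_mul, Finset.sum_ite_eq]

lemma sum_dvec (x y : V) : ∑ c, dvec x y c = 0 := by
  have h := sum_dvec_mul x y (fun _ => 1)
  simpa using h

lemma netFlow_eq (s t : E → V) (i : E → ℝ) (c : V) :
    netFlow s t i c = ∑ e, i e * rvec s t e c := by
  unfold netFlow rvec dvec
  rw [← Finset.sum_sub_distrib]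
  refine Finset.sum_congr rfl fun e _ => ?_
  by_cases h1 : s e = c <;> by_cases h2 : t e = c <;> simp [h1, h2]

lemma grad_eq (s t : E → V) (v : V → ℝ) (e : E) :
    v (s e) - v (t e) = ∑ c, rvec s t e c * v c := by
  unfold rvec
  rw [sum_dvec_mul]

def Sp (s t : E → V) (T : Finset E) : Submodule ℝ (V → ℝ) :=
  Submodule.span ℝ (Set.range fun e : ↥T => rvec s t ↑e)

lemma mem_span_of_conn (s t : E → V) (T : Finset E) {x y : V}
    (h : Relation.ReflTransGen (MAdjOn s t T) x y) : dvec x y ∈ Sp s t T := by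
  induction h with
  | refl =>
    have h0 : dvec x x = 0 := by funext c; simp [dvec]
    rw [h0]; exact (Sp s t T).zero_mem
  | @tail b c hxb hbc ih =>
    obtain ⟨e, heT, hor⟩ := hbc
    have hsplit : dvec x c = dvec x b + dvec b c := by
      funext d; simp only [dvec, Pi.add_apply]; ring
    rw [hsplit]
    refine (Sp s t T).add_mem ih ?_
    rcases hor with ⟨hs, ht⟩ | ⟨hs, ht⟩
    · have h1 : dvec b c = rvec s t e := by rw [rvec, hs, ht]
      rw [h1]
      exact Submodule.subset_span ⟨⟨e, heT⟩, rfl⟩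
    · have h1 : dvec b c = -rvec s t e := by
        rw [rvec, hs, ht]; funext d; simp only [dvec, Pi.neg_apply]; ring
      rw [h1]
      exact (Sp s t T).neg_mem (Submodule.subset_span ⟨⟨e, heT⟩, rfl⟩)

lemma conn_of_mem_span (s t : E → V) (T : Finset E)
    (h : ∀ x y : V, dvec x y ∈ Sp s t T) (x y : V) :
    Relation.ReflTransGen (MAdjOn s t T) x y := by
  classical
  by_contra hxy
  set χ : V → ℝ := fun c => if Relation.ReflTransGen (MAdjOn s t T) x c then 1 else 0 with hχ
  have hgen : ∀ u ∈ Sp s t T, ∑ c, u c * χ c = 0 := by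
    intro u hu
    induction hu using Submodule.span_induction with
    | mem u hu =>
      obtain ⟨e, rfl⟩ := hu
      have h1 : ∑ c, rvec s t ↑e c * χ c = χ (s ↑e) - χ (t ↑e) := sum_dvec_mul _ _ χ
      have hiff : Relation.ReflTransGen (MAdjOn s t T) x (s ↑e)
          ↔ Relation.ReflTransGen (MAdjOn s t T) x (t ↑e) :=
        ⟨fun hh => hh.tail ⟨↑e, e.2, Or.inl ⟨rfl, rfl⟩⟩,
         fun hh => hh.tail ⟨↑e, e.2, Or.inr ⟨rfl, rfl⟩⟩⟩
      rw [h1, hχ]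
      by_cases hc : Relation.ReflTransGen (MAdjOn s t T) x (s ↑e)
      · have hc2 := hiff.mp hc
        simp [hc, hc2]
      · have hc2 : ¬ Relation.ReflTransGen (MAdjOn s t T) x (t ↑e) :=
          fun hh => hc (hiff.mpr hh)
        simp [hc, hc2]
    | zero => simp
    | add u w _ _ ihu ihw => simp [add_mul, Finset.sum_add_distrib, ihu, ihw]
    | smul a u _ ihu =>
      simp only [Pi.smul_apply, smul_eq_mul, mul_assoc, ← Finset.mul_sum, ihu, mul_zero]
  have h2 := hgen _ (h x y)
  rw [sum_dvec_mul] at h2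
  have hx1 : χ x = 1 := by rw [hχ]; exact if_pos Relation.ReflTransGen.refl
  have hy0 : χ y = 0 := by rw [hχ]; exact if_neg hxy
  rw [hx1, hy0] at h2
  norm_num at h2

def resL (b : V) : (V → ℝ) →ₗ[ℝ] ({c : V // c ≠ b} → ℝ) :=
  LinearMap.funLeft ℝ ℝ Subtype.val

def sumL : (V → ℝ) →ₗ[ℝ] ℝ where
  toFun := fun u => ∑ c, u c
  map_add' := by intro u w; simp [Finset.sum_add_distrib]
  map_smul' := by intro r u; simp [Finset.mul_sum]

lemma sp_sum_zero (s t : E → V) (T : Finset E) : ∀ u ∈ Sp s t T, ∑ c, u c = 0 := by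
  intro u hu
  have hle : Sp s t T ≤ LinearMap.ker (sumL (V := V)) := by
    rw [Sp, Submodule.span_le]
    rintro _ ⟨e, rfl⟩
    show (∑ c, rvec s t ↑e c) = 0
    exact sum_dvec _ _
  exact hle hu

lemma span_restrict_iff (s t : E → V) (T : Finset E) (b : V) :
    (∀ x y : V, dvec x y ∈ Sp s t T) ↔
      Submodule.span ℝ (Set.range fun e : ↥T => (fun w : {c : V // c ≠ b} => rvec s t ↑e ↑w))
        = ⊤ := by
  have hmap : Submodule.map (resL b) (Sp s t T)
      = Submodule.span ℝ
          (Set.range fun e : ↥T => (fun w : {c : V // c ≠ b} => rvec s t ↑e ↑w)) := by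
    rw [Sp, Submodule.map_span]
    congr 1
    rw [← Set.range_comp]
    rfl
  constructor
  · intro h
    rw [← hmap, eq_top_iff]
    intro u _
    rw [pi_eq_sum_univ u]
    refine Submodule.sum_mem _ fun w _ => Submodule.smul_mem _ _ ?_
    have h1 : (fun j : {c : V // c ≠ b} => if w = j then (1:ℝ) else 0)
        = resL b (dvec ↑w b) := by
      funext j
      show (if w = j then (1:ℝ) else 0) = dvec (↑w) b ↑j
      have hb : (if b = (↑j : V) then (1:ℝ) else 0) = 0 := if_neg (fun hh => j.2 hh.symm)
      simp only [dvec, hb, sub_zero]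
      by_cases hj : w = j
      · rw [if_pos hj, if_pos (by rw [hj])]
      · rw [if_neg hj, if_neg (fun hh => hj (Subtype.ext hh))]
    rw [h1]
    exact Submodule.mem_map_of_mem (h ↑w b)
  · intro h x y
    have hxy : resL b (dvec x y) ∈ Submodule.map (resL b) (Sp s t T) := by
      rw [hmap, h]; trivial
    obtain ⟨u, huSp, huv⟩ := hxy
    have hueq : u = dvec x y := by
      have hsu : ∑ c, u c = 0 := sp_sum_zero s t T u huSp
      have hsd : ∑ c, dvec x y c = 0 := sum_dvec x y
      have hoff : ∀ c, c ≠ b → u c = dvec x y c := by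
        intro c hc
        exact congrFun huv ⟨c, hc⟩
      funext c
      by_cases hc : c = b
      · subst hc
        have h1 := hsu
        rw [Finset.sum_eq_sum_sdiff_singleton_add (Finset.mem_univ c) u] at h1
        have h2 := hsd
        rw [Finset.sum_eq_sum_sdiff_singleton_add (Finset.mem_univ c) (dvec x y)] at h2
        have h3 : ∑ x_1 ∈ Finset.univ \ {c}, u x_1
            = ∑ x_1 ∈ Finset.univ \ {c}, dvec x y x_1 := by
          refine Finset.sum_congr rfl fun d hd => ?_
          rw [Finset.mem_sdiff, Finset.mem_singleton] at hd
          exact hoff d hd.2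
        rw [h3] at h1
        linarith
      · exact hoff c hc
    rw [← hueq]
    exact huSp

lemma conn_iff_span_top (s t : E → V) (T : Finset E) (b : V) :
    (∀ x y : V, Relation.ReflTransGen (MAdjOn s t T) x y) ↔
      Submodule.span ℝ (Set.range fun e : ↥T => (fun w : {c : V // c ≠ b} => rvec s t ↑e ↑w))
        = ⊤ :=
  ⟨fun h => (span_restrict_iff s t T b).mp (fun x y => mem_span_of_conn s t T (h x y)),
   fun h x y => conn_of_mem_span s t T ((span_restrict_iff s t T b).mpr h) x y⟩

end Graph
section Bridge

open Matrix Finset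

lemma card_ne_aux {α : Type} [Fintype α] [DecidableEq α] (b : α) :
    Fintype.card {c : α // c ≠ b} + 1 = Fintype.card α := by
  have h1 := Fintype.card_subtype_compl (fun c : α => c = b)
  have h2 : Fintype.card {c : α // c ≠ b} = Fintype.card {c : α // ¬ c = b} :=
    Fintype.card_congr (Equiv.subtypeEquivRight fun _ => Iff.rfl)
  rw [Fintype.card_subtype_eq] at h1
  have h3 : 0 < Fintype.card α := @Fintype.card_pos α _ ⟨b⟩
  omega

variable {V E : Type} [Fintype V] [Fintype E] [DecidableEq V] [DecidableEq E]

def IndepOn {κ : Type} (ρ : E → κ → ℝ) (T : Finset E) : Prop :=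
  ∀ g : E → ℝ, (∑ e ∈ T, g e • ρ e) = 0 → ∀ e ∈ T, g e = 0

lemma indepOn_iff {κ : Type} [Fintype κ] (ρ : E → κ → ℝ) (T : Finset E) :
    IndepOn ρ T ↔ LinearIndependent ℝ (fun e : ↥T => ρ ↑e) := by
  classical
  rw [Fintype.linearIndependent_iff]
  constructor
  · intro h g hg i
    set G : E → ℝ := fun e => if h : e ∈ T then g ⟨e, h⟩ else 0 with hG
    have hsum : ∑ e ∈ T, G e • ρ e = 0 := by
      rw [← Finset.sum_attach T (fun e => G e • ρ e), ← hg, Finset.univ_eq_attach]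
      refine Finset.sum_congr rfl fun x _ => ?_
      rw [hG]
      simp [x.2]
    have h2 := h G hsum ↑i i.2
    rw [hG] at h2
    simpa [i.2] using h2
  · intro h g hsum e he
    have hg : ∑ i : ↥T, g ↑i • ρ ↑i = 0 := by
      rw [Finset.univ_eq_attach, Finset.sum_attach T (fun e => g e • ρ e)]
      exact hsum
    exact h (fun i => g ↑i) hg ⟨e, he⟩

lemma li_iff_span {κ : Type} [Fintype κ] (ρ : E → κ → ℝ) (T : Finset E)
    (h : T.card = Fintype.card κ) :
    LinearIndependent ℝ (fun e : ↥T => ρ ↑e) ↔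
      Submodule.span ℝ (Set.range fun e : ↥T => ρ ↑e) = ⊤ := by
  have hcard : Fintype.card ↥T = Module.finrank ℝ (κ → ℝ) := by
    rw [Fintype.card_coe, h, Module.finrank_fintype_fun_eq_card]
  constructor
  · intro hli
    rcases isEmpty_or_nonempty ↥T with hE | hNE
    · have hκ : Fintype.card κ = 0 := by
        have h0 : Fintype.card ↥T = 0 := Fintype.card_eq_zero
        rw [Fintype.card_coe] at h0
        omega
      haveI : IsEmpty κ := Fintype.card_eq_zero_iff.mp hκ
      haveI : Subsingleton (κ → ℝ) := ⟨fun f g => funext fun x => isEmptyElim x⟩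
      exact Subsingleton.elim _ _
    · have hb := coe_basisOfLinearIndependentOfCardEqFinrank hli hcard
      rw [show (fun e : ↥T => ρ ↑e) = ⇑(basisOfLinearIndependentOfCardEqFinrank hli hcard)
        from hb.symm]
      exact (basisOfLinearIndependentOfCardEqFinrank hli hcard).span_eq
  · intro hsp
    exact linearIndependent_of_top_le_span_of_card_eq_finrank hsp.ge hcard

lemma rdet_ne_zero_iff {W : Type} [Fintype W] [DecidableEq W] (X : Matrix E W ℝ)
    (T : Finset E) (hT : T.card = Fintype.card W) :
    rdet X T ≠ 0 ↔ LinearIndependent ℝ (fun e : ↥T => X ↑e) := by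
  rw [rdet_pos X T hT, ← isUnit_iff_ne_zero, ← Matrix.isUnit_iff_isUnit_det,
    ← Matrix.linearIndependent_rows_iff_isUnit]
  exact linearIndependent_equiv' (tEquiv T hT) rfl

lemma rdet_sq_one_iff {W : Type} [Fintype W] [DecidableEq W] (X : Matrix E W ℝ)
    (T : Finset E) (hT : T.card = Fintype.card W)
    (htu : (rdet X T) ^ 2 = 0 ∨ (rdet X T) ^ 2 = 1) :
    (rdet X T) ^ 2 = 1 ↔ LinearIndependent ℝ (fun e : ↥T => X ↑e) := by
  rw [← rdet_ne_zero_iff X T hT]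
  constructor
  · intro h1 h0
    rw [h0] at h1
    norm_num at h1
  · intro hne
    rcases htu with h | h
    · exact absurd ((pow_eq_zero_iff two_ne_zero).mp h) hne
    · exact h

lemma rdet_tu (s t : E → V) {ι : Type} [Fintype ι] [DecidableEq ι] (φ : ι → V)
    (hφ : Function.Injective φ) (T : Finset E) :
    (rdet (Matrix.of fun e (w : ι) => rvec s t e (φ w)) T) ^ 2 = 0 ∨
      (rdet (Matrix.of fun e (w : ι) => rvec s t e (φ w)) T) ^ 2 = 1 := by
  classical
  by_cases hT : T.card = Fintype.card ι
  · rw [rdet_pos _ T hT]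
    apply tu_aux (Fintype.card ι) ι rfl
    intro w
    set e : E := ↑(tEquiv T hT w) with he
    have key : ∀ z : V, ∃ x : Option ι, ∀ w' : ι,
        (if z = φ w' then (1:ℝ) else 0) = (if x = some w' then 1 else 0) := by
      intro z
      by_cases h : ∃ u, φ u = z
      · refine ⟨some h.choose, fun w' => ?_⟩
        by_cases hz : z = φ w'
        · rw [if_pos hz, if_pos (congrArg some (hφ (h.choose_spec.trans hz)))]
        · rw [if_neg hz, if_neg (fun hh => hz (by
            rw [← h.choose_spec, Option.some.inj hh]))]
      · exact ⟨none, fun w' => by rw [if_neg (fun hz => h ⟨w', hz.symm⟩)]; simp⟩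
    obtain ⟨x, hx⟩ := key (s e)
    obtain ⟨y, hy⟩ := key (t e)
    refine ⟨x, y, funext fun w' => ?_⟩
    show (if s e = φ w' then (1:ℝ) else 0) - (if t e = φ w' then 1 else 0)
      = (if x = some w' then 1 else 0) - (if y = some w' then 1 else 0)
    rw [hx w', hy w']
  · left
    rw [rdet, dif_neg hT]
    norm_num

lemma spanningTree_iff (s t : E → V) (b : V) (T : Finset E) :
    IsSpanningTree s t T ↔
      (T.card = Fintype.card {c : V // c ≠ b} ∧
        (rdet (Matrix.of fun e (w : {c : V // c ≠ b}) => rvec s t e ↑w) T) ^ 2 = 1) := by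
  have hcV := card_ne_aux b
  constructor
  · rintro ⟨hconn, hcard⟩
    have hT : T.card = Fintype.card {c : V // c ≠ b} := by omega
    refine ⟨hT, ?_⟩
    rw [rdet_sq_one_iff _ T hT (rdet_tu s t Subtype.val Subtype.val_injective T)]
    exact (li_iff_span (fun e => fun w : {c : V // c ≠ b} => rvec s t e ↑w) T hT).mpr
      ((conn_iff_span_top s t T b).mp hconn)
  · rintro ⟨hT, hsq⟩
    refine ⟨?_, by omega⟩
    have hli := (rdet_sq_one_iff _ T hT
      (rdet_tu s t Subtype.val Subtype.val_injective T)).mp hsq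
    exact (conn_iff_span_top s t T b).mpr
      ((li_iff_span (fun e => fun w : {c : V // c ≠ b} => rvec s t e ↑w) T hT).mp hli)

end Bridge
section Transfer

open Matrix Finset

variable {V E : Type} [Fintype V] [Fintype E] [DecidableEq V] [DecidableEq E]

lemma delta_cases (s t : E → V) (a b : V) (hab : a ≠ b) (e₀ : E)
    (he₀ : (s e₀ = a ∧ t e₀ = b) ∨ (s e₀ = b ∧ t e₀ = a)) :
    (fun w : {c : V // c ≠ b} => rvec s t e₀ ↑w)
        = (fun w : {c : V // c ≠ b} => if w = ⟨a, hab⟩ then (1:ℝ) else 0)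
    ∨ (fun w : {c : V // c ≠ b} => rvec s t e₀ ↑w)
        = (fun w : {c : V // c ≠ b} => -(if w = ⟨a, hab⟩ then (1:ℝ) else 0)) := by
  rcases he₀ with ⟨hs, ht⟩ | ⟨hs, ht⟩
  · left
    funext w
    show (if s e₀ = ↑w then (1:ℝ) else 0) - (if t e₀ = ↑w then 1 else 0) = _
    rw [hs, ht]
    have hb : (if b = (↑w : V) then (1:ℝ) else 0) = 0 := if_neg (fun hh => w.2 hh.symm)
    rw [hb, sub_zero]
    by_cases hw : w = ⟨a, hab⟩
    · rw [if_pos hw, if_pos (by rw [hw])]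
    · rw [if_neg hw, if_neg (fun hh => hw (Subtype.ext hh.symm))]
  · right
    funext w
    show (if s e₀ = ↑w then (1:ℝ) else 0) - (if t e₀ = ↑w then 1 else 0) = _
    rw [hs, ht]
    have hb : (if b = (↑w : V) then (1:ℝ) else 0) = 0 := if_neg (fun hh => w.2 hh.symm)
    rw [hb, zero_sub]
    by_cases hw : w = ⟨a, hab⟩
    · rw [if_pos hw, if_pos (by rw [hw])]
    · rw [if_neg hw, if_neg (fun hh => hw (Subtype.ext hh.symm))]

lemma rho2_e0 (s t : E → V) (a b : V) (hab : a ≠ b) (e₀ : E)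
    (he₀ : (s e₀ = a ∧ t e₀ = b) ∨ (s e₀ = b ∧ t e₀ = a)) :
    (fun w : {w : {c : V // c ≠ b} // w ≠ ⟨a, hab⟩} => rvec s t e₀ ↑↑w) = 0 := by
  funext w
  have hwa : (↑↑w : V) ≠ a := fun hh => w.2 (Subtype.ext hh)
  have hwb : (↑↑w : V) ≠ b := (↑w : {c : V // c ≠ b}).2
  show (if s e₀ = ↑↑w then (1:ℝ) else 0) - (if t e₀ = ↑↑w then 1 else 0) = 0
  rcases he₀ with ⟨hs, ht⟩ | ⟨hs, ht⟩ <;>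
    rw [hs, ht, if_neg (fun hh => (by simp_all : False)),
      if_neg (fun hh => (by simp_all : False)), sub_zero]

lemma transfer_forward (s t : E → V) (a b : V) (hab : a ≠ b) (e₀ : E)
    (he₀ : (s e₀ = a ∧ t e₀ = b) ∨ (s e₀ = b ∧ t e₀ = a))
    (T : Finset E) (he₀T : e₀ ∈ T)
    (hind : IndepOn (fun e => fun w : {c : V // c ≠ b} => rvec s t e ↑w) T) :
    IndepOn (fun e => fun w : {w : {c : V // c ≠ b} // w ≠ ⟨a, hab⟩} => rvec s t e ↑↑w)
      (T.erase e₀) := by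
  classical
  intro g hsum e he
  set δ : {c : V // c ≠ b} → ℝ := fun w => if w = ⟨a, hab⟩ then 1 else 0 with hδ
  set u : {c : V // c ≠ b} → ℝ :=
    ∑ e' ∈ T.erase e₀, g e' • (fun w : {c : V // c ≠ b} => rvec s t e' ↑w) with hu
  have hures : ∀ w : {c : V // c ≠ b}, w ≠ ⟨a, hab⟩ → u w = 0 := by
    intro w hw
    have h1 : u w = ∑ e' ∈ T.erase e₀, g e' * rvec s t e' ↑w := by
      rw [hu]
      simp only [Finset.sum_apply, Pi.smul_apply, smul_eq_mul]
    have h2 := congrFun hsum ⟨w, hw⟩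
    rw [Finset.sum_apply] at h2
    simp only [Pi.smul_apply, smul_eq_mul, Pi.zero_apply] at h2
    rw [h1]
    exact h2
  have hua : u = u ⟨a, hab⟩ • δ := by
    funext w
    by_cases hw : w = ⟨a, hab⟩
    · subst hw
      simp [hδ]
    · simp [hures w hw, hδ, hw]
  have key : ∀ G : E → ℝ, (G e₀ • (fun w : {c : V // c ≠ b} => rvec s t e₀ ↑w) = -u) →
      (∀ e' ∈ T.erase e₀, G e' = g e') → ∀ e' ∈ T, G e' = 0 := by
    intro G hGe₀ hGg
    apply hind G
    rw [← Finset.sum_erase_add T _ he₀T]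
    have h3 : ∑ e' ∈ T.erase e₀, G e' • (fun w : {c : V // c ≠ b} => rvec s t e' ↑w)
        = u := by
      rw [hu]
      exact Finset.sum_congr rfl fun e' he' => by rw [hGg e' he']
    rw [h3, hGe₀]
    funext w
    simp
  rcases delta_cases s t a b hab e₀ he₀ with hd | hd
  · have h4 := key (Function.update g e₀ (-(u ⟨a, hab⟩)))
      (by
        rw [Function.update_self, hd]
        funext w
        have h6 := congrFun hua w
        simp only [Pi.smul_apply, smul_eq_mul, Pi.neg_apply, hδ] at h6 ⊢
        rw [h6]
        by_cases hw : w = ⟨a, hab⟩ <;> simp [hw])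
      (fun e' he' => Function.update_of_ne (Finset.ne_of_mem_erase he') _ _)
    have h5 := h4 e (Finset.mem_of_mem_erase he)
    rw [Function.update_of_ne (Finset.ne_of_mem_erase he)] at h5
    exact h5
  · have h4 := key (Function.update g e₀ (u ⟨a, hab⟩))
      (by
        rw [Function.update_self, hd]
        funext w
        have h6 := congrFun hua w
        simp only [Pi.smul_apply, smul_eq_mul, Pi.neg_apply, hδ] at h6 ⊢
        rw [h6]
        by_cases hw : w = ⟨a, hab⟩ <;> simp [hw])
      (fun e' he' => Function.update_of_ne (Finset.ne_of_mem_erase he') _ _)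
    have h5 := h4 e (Finset.mem_of_mem_erase he)
    rw [Function.update_of_ne (Finset.ne_of_mem_erase he)] at h5
    exact h5

lemma transfer_back (s t : E → V) (a b : V) (hab : a ≠ b) (e₀ : E)
    (he₀ : (s e₀ = a ∧ t e₀ = b) ∨ (s e₀ = b ∧ t e₀ = a))
    (F : Finset E)
    (hF : IndepOn (fun e => fun w : {w : {c : V // c ≠ b} // w ≠ ⟨a, hab⟩} => rvec s t e ↑↑w) F) :
    e₀ ∉ F ∧
      IndepOn (fun e => fun w : {c : V // c ≠ b} => rvec s t e ↑w) (insert e₀ F) := by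
  classical
  have hρ2 := rho2_e0 s t a b hab e₀ he₀
  have he₀F : e₀ ∉ F := by
    intro hmem
    have h0 : ∑ e ∈ F, (if e = e₀ then (1:ℝ) else 0)
        • (fun w : {w : {c : V // c ≠ b} // w ≠ ⟨a, hab⟩} => rvec s t e ↑↑w) = 0 := by
      have h1 : ∀ e ∈ F, (if e = e₀ then (1:ℝ) else 0)
          • (fun w : {w : {c : V // c ≠ b} // w ≠ ⟨a, hab⟩} => rvec s t e ↑↑w)
          = if e = e₀ then (fun w : {w : {c : V // c ≠ b} // w ≠ ⟨a, hab⟩} => rvec s t e ↑↑w)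
            else 0 := by
        intro e _
        by_cases h : e = e₀ <;> simp [h]
      rw [Finset.sum_congr rfl h1]
      rw [Finset.sum_ite_eq' F e₀
        (fun e => (fun w : {w : {c : V // c ≠ b} // w ≠ ⟨a, hab⟩} => rvec s t e ↑↑w))]
      rw [if_pos hmem, hρ2]
    have h2 := hF _ h0 e₀ hmem
    simp at h2
  refine ⟨he₀F, ?_⟩
  intro g hsum e he
  have hres : ∑ e' ∈ F, g e'
      • (fun w : {w : {c : V // c ≠ b} // w ≠ ⟨a, hab⟩} => rvec s t e' ↑↑w) = 0 := by
    funext w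
    have h2 := congrFun hsum ↑w
    rw [Finset.sum_insert he₀F] at h2
    simp only [Finset.sum_apply, Pi.add_apply, Pi.smul_apply, smul_eq_mul,
      Pi.zero_apply] at h2 ⊢
    have h3 : rvec s t e₀ ↑(↑w : {c : V // c ≠ b}) = 0 := by
      have := congrFun hρ2 w
      exact this
    rw [h3, mul_zero, zero_add] at h2
    exact h2
  have hFzero : ∀ e' ∈ F, g e' = 0 := hF g hres
  have hsum2 : g e₀ • (fun w : {c : V // c ≠ b} => rvec s t e₀ ↑w) = 0 := by
    rw [Finset.sum_insert he₀F] at hsum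
    have h4 : ∑ e' ∈ F, g e' • (fun w : {c : V // c ≠ b} => rvec s t e' ↑w) = 0 := by
      refine Finset.sum_eq_zero fun e' he' => ?_
      rw [hFzero e' he', zero_smul]
    rw [h4, add_zero] at hsum
    exact hsum
  have hge₀ : g e₀ = 0 := by
    rcases delta_cases s t a b hab e₀ he₀ with hd | hd
    · have h5 := congrFun hsum2 ⟨a, hab⟩
      rw [hd] at h5
      simpa using h5
    · have h5 := congrFun hsum2 ⟨a, hab⟩
      rw [hd] at h5
      simpa using h5
  rcases Finset.mem_insert.mp he with rfl | hmem
  · exact hge₀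
  · exact hFzero e hmem

lemma exists_spanningTree (s t : E → V) (hconn : MConnected s t) :
    ∃ T : Finset E, IsSpanningTree s t T := by
  classical
  obtain ⟨hne, hc⟩ := hconn
  obtain ⟨b⟩ := hne
  set ρ : E → ({c : V // c ≠ b} → ℝ) := fun e => fun w => rvec s t e ↑w with hρ
  have hsp : Submodule.span ℝ
      (Set.range fun e : ↥(Finset.univ : Finset E) => ρ ↑e) = ⊤ :=
    (conn_iff_span_top s t Finset.univ b).mp hc
  have hsp2 : Submodule.span ℝ (Set.range ρ) = ⊤ := by
    rw [← hsp]
    congr 1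
    ext u
    constructor
    · rintro ⟨e, rfl⟩
      exact ⟨⟨e, Finset.mem_univ e⟩, rfl⟩
    · rintro ⟨e, rfl⟩
      exact ⟨↑e, rfl⟩
  obtain ⟨sv, hsub, hspan, hli⟩ := exists_linearIndependent ℝ (Set.range ρ)
  have hfin : sv.Finite := (Set.finite_range ρ).subset hsub
  haveI : Fintype sv := hfin.fintype
  have hchoice : ∀ y : sv, ∃ e : E, ρ e = ↑y := fun y => hsub y.2
  set f : sv → E := fun y => (hchoice y).choose with hf
  have hfspec : ∀ y : sv, ρ (f y) = ↑y := fun y => (hchoice y).choose_spec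
  have hfinj : Function.Injective f := by
    intro y y' hyy
    apply Subtype.ext
    rw [← hfspec y, ← hfspec y', hyy]
  set T : Finset E := Finset.univ.image f with hT
  have hrange : (Set.range fun e : ↥T => ρ ↑e) = sv := by
    ext u
    constructor
    · rintro ⟨e, rfl⟩
      show ρ ↑e ∈ sv
      have he2 : (↑e : E) ∈ Finset.univ.image f := by rw [← hT]; exact e.2
      rw [Finset.mem_image] at he2
      obtain ⟨y, _, hy⟩ := he2
      have h9 := hfspec y
      rw [hy] at h9
      rw [h9]
      exact y.2
    · intro hu
      refine ⟨⟨f ⟨u, hu⟩, ?_⟩, hfspec ⟨u, hu⟩⟩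
      rw [hT]
      exact Finset.mem_image_of_mem f (Finset.mem_univ _)
  have hspT : Submodule.span ℝ (Set.range fun e : ↥T => ρ ↑e) = ⊤ := by
    rw [hrange, hspan]
    exact hsp2
  have hcardT : T.card = Fintype.card {c : V // c ≠ b} := by
    rw [hT, Finset.card_image_of_injective _ hfinj, Finset.card_univ]
    -- Fintype.card sv = finrank = card subtype
    have hBtop : ⊤ ≤ Submodule.span ℝ (Set.range (Subtype.val : sv → _)) := by
      rw [Subtype.range_coe, hspan, hsp2]
    have hB : Module.finrank ℝ ({c : V // c ≠ b} → ℝ) = Fintype.card sv :=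
      Module.finrank_eq_card_basis (Module.Basis.mk hli hBtop)
    rw [← hB, Module.finrank_fintype_fun_eq_card]
  refine ⟨T, ?_, ?_⟩
  · exact (conn_iff_span_top s t T b).mpr hspT
  · rw [hcardT]
    exact card_ne_aux b

end Transfer

open Matrix Finset in
/-- for any edge `e₀` between `a` and `b` in a finite connected multigraph
with unit resistors, the effective resistance `R_{ab}` equals the probability that `e₀`
lies in a uniformly random spanning tree, i.e. (# spanning trees containing `e₀`) /
(# spanning trees). -/
theorem stmt2 {V E : Type} [Fintype V] [Fintype E] [DecidableEq V] [DecidableEq E]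
    (s t : E → V) (hconn : MConnected s t) (e₀ : E) (a b : V)
    (he₀ : (s e₀ = a ∧ t e₀ = b) ∨ (s e₀ = b ∧ t e₀ = a))
    (v : V → ℝ) (i : E → ℝ) (hflow : IsUnitFlow s t a b v i) :
    v a - v b =
      (Nat.card {T : Finset E // IsSpanningTree s t T ∧ e₀ ∈ T} : ℝ) /
        (Nat.card {T : Finset E // IsSpanningTree s t T} : ℝ) := by
  classical
  obtain ⟨hflow1, hflow2⟩ := hflow
  by_cases hab : a = b
  · -- degenerate case : e₀ is a loop
    subst hab
    rw [sub_self]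
    have hempty : IsEmpty {T : Finset E // IsSpanningTree s t T ∧ e₀ ∈ T} := by
      constructor
      rintro ⟨T, ⟨hconnT, hcardT⟩, heT⟩
      have hs0 : s e₀ = a := by rcases he₀ with ⟨h, _⟩ | ⟨h, _⟩ <;> exact h
      have ht0 : t e₀ = a := by rcases he₀ with ⟨_, h⟩ | ⟨_, h⟩ <;> exact h
      have hconn' : ∀ x y : V, Relation.ReflTransGen (MAdjOn s t (T.erase e₀)) x y := by
        intro x y
        have h := hconnT x y
        induction h with
        | refl => exact Relation.ReflTransGen.refl
        | @tail p q hxp hpq ih =>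
          obtain ⟨e, heT2, hor⟩ := hpq
          by_cases hee : e = e₀
          · subst hee
            have hpq2 : p = q := by
              rcases hor with ⟨h1, h2⟩ | ⟨h1, h2⟩
              · rw [← h1, ← h2, hs0, ht0]
              · rw [← h2, ← h1, hs0, ht0]
            exact hpq2 ▸ ih
          · exact ih.tail ⟨e, Finset.mem_erase.mpr ⟨hee, heT2⟩, hor⟩
      have hsp := (conn_iff_span_top s t (T.erase e₀) a).mp hconn'
      have hle : Fintype.card {c : V // c ≠ a} ≤ (T.erase e₀).card := by
        have h1 := finrank_range_le_card (R := ℝ)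
          (b := fun e : ↥(T.erase e₀) => (fun w : {c : V // c ≠ a} => rvec s t ↑e ↑w))
        have h2 : (Set.range fun e : ↥(T.erase e₀) =>
            (fun w : {c : V // c ≠ a} => rvec s t ↑e ↑w)).finrank ℝ
            = Fintype.card {c : V // c ≠ a} := by
          rw [Set.finrank, hsp, finrank_top, Module.finrank_fintype_fun_eq_card]
        rw [h2, Fintype.card_coe] at h1
        exact h1
      have hc1 := card_ne_aux (α := V) a
      have hc2 : (T.erase e₀).card + 1 = T.card := Finset.card_erase_add_one heT
      omega
    rw [Nat.card_of_isEmpty, Nat.cast_zero, zero_div]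
  · -- main case
    have hab' : a ≠ b := hab
    set a' : {c : V // c ≠ b} := ⟨a, hab'⟩ with ha'
    set X1 : Matrix E {c : V // c ≠ b} ℝ := Matrix.of fun e w => rvec s t e ↑w with hX1
    set X2 : Matrix E {w : {c : V // c ≠ b} // w ≠ a'} ℝ :=
      Matrix.of fun e w => rvec s t e ↑↑w with hX2
    set A : Matrix {c : V // c ≠ b} {c : V // c ≠ b} ℝ := X1ᵀ * X1 with hA
    set x : {c : V // c ≠ b} → ℝ := fun w => v ↑w - v b with hx
    -- Step 1 : A *ᵥ x = Pi.single a' 1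
    have hmv : A *ᵥ x = Pi.single a' 1 := by
      funext w
      have h1a : (A *ᵥ x) w = ∑ w', A w w' * x w' := by
        simp [Matrix.mulVec, dotProduct]
      have h1b : ∀ w', A w w' = ∑ e, X1 e w * X1 e w' := by
        intro w'
        rw [hA, Matrix.mul_apply]
        refine Finset.sum_congr rfl fun e _ => ?_
        rw [Matrix.transpose_apply]
      have h1 : (A *ᵥ x) w = ∑ e, X1 e w * (∑ w', X1 e w' * x w') := by
        rw [h1a]
        calc ∑ w', A w w' * x w' = ∑ w', ∑ e, X1 e w * X1 e w' * x w' := by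
              refine Finset.sum_congr rfl fun w' _ => ?_
              rw [h1b w', Finset.sum_mul]
          _ = ∑ e, ∑ w', X1 e w * X1 e w' * x w' := Finset.sum_comm
          _ = ∑ e, X1 e w * ∑ w', X1 e w' * x w' := by
              refine Finset.sum_congr rfl fun e _ => ?_
              rw [Finset.mul_sum]
              exact Finset.sum_congr rfl fun w' _ => mul_assoc _ _ _
      have hinner : ∀ e, (∑ w' : {c : V // c ≠ b}, X1 e w' * x w') = i e := by
        intro e
        have h2a : ∑ w' : {c : V // c ≠ b}, X1 e w' * x w'
            = ∑ c ∈ Finset.univ.erase b, rvec s t e c * (v c - v b) := by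
          rw [Finset.sum_subtype (p := fun c => c ≠ b) (Finset.univ.erase b)
            (fun c => by simp [Finset.mem_erase]) (fun c => rvec s t e c * (v c - v b))]
          rfl
        have h2b : ∑ c ∈ Finset.univ.erase b, rvec s t e c * (v c - v b)
            = ∑ c, rvec s t e c * (v c - v b) := by
          have h := Finset.sum_erase_add Finset.univ
            (fun c => rvec s t e c * (v c - v b)) (Finset.mem_univ b)
          simp only [sub_self, mul_zero, add_zero] at h
          exact h
        have h2c : ∑ c, rvec s t e c * (v c - v b) = v (s e) - v (t e) := by
          have hsplit : ∀ c : V, rvec s t e c * (v c - v b)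
              = rvec s t e c * v c - rvec s t e c * v b := fun c => by ring
          rw [Finset.sum_congr rfl (fun c _ => hsplit c), Finset.sum_sub_distrib,
            ← Finset.sum_mul]
          have hz : ∑ c, rvec s t e c = 0 := sum_dvec (s e) (t e)
          rw [hz, zero_mul, sub_zero, ← grad_eq]
        rw [h2a, h2b, h2c]
        exact hflow2 e
      have h3 : (A *ᵥ x) w = netFlow s t i ↑w := by
        rw [h1, netFlow_eq]
        refine Finset.sum_congr rfl fun e _ => ?_
        rw [hinner e]
        show X1 e w * i e = i e * rvec s t e ↑w
        rw [hX1]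
        simp only [Matrix.of_apply]
        ring
      rw [h3, hflow1 ↑w]
      have hwb : (if (↑w : V) = b then (1:ℝ) else 0) = 0 := if_neg w.2
      rw [hwb, sub_zero, Pi.single_apply]
      by_cases hw : (↑w : V) = a
      · rw [if_pos hw, if_pos (show w = a' from Subtype.ext hw)]
      · rw [if_neg hw, if_neg (fun hh : w = a' => hw (congrArg Subtype.val hh))]
    -- Step 2 : A.det * (v a - v b) = adjugate entry
    have hdet1 : A.det * (v a - v b) = A.adjugate a' a' := by
      have h1 : A.det • x = A.adjugate *ᵥ (A *ᵥ x) := by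
        calc A.det • x = (A.det • (1 : Matrix _ _ ℝ)) *ᵥ x := by
              rw [Matrix.smul_mulVec, Matrix.one_mulVec]
          _ = (A.adjugate * A) *ᵥ x := by rw [Matrix.adjugate_mul]
          _ = A.adjugate *ᵥ (A *ᵥ x) := by rw [← Matrix.mulVec_mulVec]
      have h2 := congrFun h1 a'
      rw [hmv, Matrix.mulVec_single_one] at h2
      simp only [Pi.smul_apply, smul_eq_mul, mul_one] at h2
      have hxa : x a' = v a - v b := by rw [hx]
      rw [hxa] at h2
      exact h2
    -- Step 3 : adjugate diagonal = minor determinant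
    have hmind : A.adjugate a' a'
        = (Matrix.of fun p q : {w : {c : V // c ≠ b} // w ≠ a'} => A ↑p ↑q).det := by
      rw [Matrix.adjugate_apply]
      have hpiv := det_pivot (A.updateRow a' (Pi.single a' 1)) a' 1 (fun w => by
        rw [Matrix.updateRow_self, Pi.single_apply])
      rw [hpiv, one_mul]
      congr 1
      ext p q
      simp only [Matrix.of_apply]
      rw [Matrix.updateRow_ne p.2]
    -- Step 4 : minor = X2ᵀ * X2
    have hminor : (Matrix.of fun p q : {w : {c : V // c ≠ b} // w ≠ a'} => A ↑p ↑q)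
        = X2ᵀ * X2 := by
      ext p q
      simp only [Matrix.of_apply, hA, Matrix.mul_apply, Matrix.transpose_apply, hX1, hX2]
    -- Step 5 : counting
    have htuX1 : ∀ T : Finset E, (rdet X1 T) ^ 2 = 0 ∨ (rdet X1 T) ^ 2 = 1 :=
      fun T => rdet_tu s t Subtype.val Subtype.val_injective T
    have hinj2 : Function.Injective (fun w : {w : {c : V // c ≠ b} // w ≠ a'} => (↑↑w : V)) :=
      fun w w' h => Subtype.ext (Subtype.ext h)
    have htuX2 : ∀ F : Finset E, (rdet X2 F) ^ 2 = 0 ∨ (rdet X2 F) ^ 2 = 1 := by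
      intro F
      rw [hX2]
      exact rdet_tu s t (fun w : {w : {c : V // c ≠ b} // w ≠ a'} => (↑↑w : V)) hinj2 F
    have hcV := card_ne_aux (α := V) b
    have hcW := card_ne_aux (α := {c : V // c ≠ b}) a'
    have hdetA : A.det
        = ((Finset.univ.filter (fun T : Finset E => IsSpanningTree s t T)).card : ℝ) := by
      rw [hA, cauchy_binet_sq X1, sum_sq_filter X1 htuX1]
      have hfe : (Finset.univ.filter (fun T : Finset E =>
          T.card = Fintype.card {c : V // c ≠ b} ∧ (rdet X1 T) ^ 2 = 1))
          = (Finset.univ.filter (fun T : Finset E => IsSpanningTree s t T)) := by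
        apply Finset.filter_congr
        intro T _
        exact (spanningTree_iff s t b T).symm
      rw [hfe]
    have hNden : (Nat.card {T : Finset E // IsSpanningTree s t T})
        = (Finset.univ.filter (fun T : Finset E => IsSpanningTree s t T)).card := by
      rw [Nat.card_eq_fintype_card]
      exact Fintype.card_subtype _
    have hNpos : 0 < (Finset.univ.filter (fun T : Finset E => IsSpanningTree s t T)).card := by
      obtain ⟨T₀, hT₀⟩ := exists_spanningTree s t hconn
      exact Finset.card_pos.mpr ⟨T₀, Finset.mem_filter.mpr ⟨Finset.mem_univ _, hT₀⟩⟩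
    have hdetM : (X2ᵀ * X2).det
        = ((Finset.univ.filter (fun F : Finset E =>
            F.card = Fintype.card {w : {c : V // c ≠ b} // w ≠ a'}
              ∧ (rdet X2 F) ^ 2 = 1)).card : ℝ) := by
      rw [cauchy_binet_sq X2, sum_sq_filter X2 htuX2]
    have hbijcard :
        (Finset.univ.filter (fun T : Finset E => IsSpanningTree s t T ∧ e₀ ∈ T)).card
        = (Finset.univ.filter (fun F : Finset E =>
            F.card = Fintype.card {w : {c : V // c ≠ b} // w ≠ a'}
              ∧ (rdet X2 F) ^ 2 = 1)).card := by
      apply Finset.card_bij (i := fun T _ => T.erase e₀)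
      · intro T hT
        rw [Finset.mem_filter] at hT
        obtain ⟨_, ⟨hconnT, hcardT⟩, he₀T⟩ := hT
        have hTc : T.card = Fintype.card {c : V // c ≠ b} := by omega
        have hFc : (T.erase e₀).card = Fintype.card {w : {c : V // c ≠ b} // w ≠ a'} := by
          have h9 := Finset.card_erase_add_one he₀T
          omega
        rw [Finset.mem_filter]
        refine ⟨Finset.mem_univ _, hFc, ?_⟩
        have hsq1 : (rdet X1 T) ^ 2 = 1 :=
          ((spanningTree_iff s t b T).mp ⟨hconnT, hcardT⟩).2
        have hli1 : LinearIndependent ℝ (fun e : ↥T => X1 ↑e) :=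
          (rdet_sq_one_iff X1 T hTc (htuX1 T)).mp hsq1
        have hIndep1 : IndepOn (fun e => fun w : {c : V // c ≠ b} => rvec s t e ↑w) T :=
          (indepOn_iff _ T).mpr hli1
        have hIndep2 := transfer_forward s t a b hab' e₀ he₀ T he₀T hIndep1
        have hli2 : LinearIndependent ℝ (fun e : ↥(T.erase e₀) => X2 ↑e) :=
          (indepOn_iff _ (T.erase e₀)).mp hIndep2
        exact (rdet_sq_one_iff X2 (T.erase e₀) hFc (htuX2 _)).mpr hli2
      · intro T1 h1 T2 h2 heq
        rw [Finset.mem_filter] at h1 h2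
        rw [← Finset.insert_erase h1.2.2, ← Finset.insert_erase h2.2.2, heq]
      · intro F hF
        rw [Finset.mem_filter] at hF
        obtain ⟨_, hFc, hsq2⟩ := hF
        have hli2 : LinearIndependent ℝ (fun e : ↥F => X2 ↑e) :=
          (rdet_sq_one_iff X2 F hFc (htuX2 F)).mp hsq2
        have hIndep2 : IndepOn (fun e => fun w : {w : {c : V // c ≠ b} // w ≠ a'} =>
            rvec s t e ↑↑w) F := (indepOn_iff _ F).mpr hli2
        obtain ⟨he₀F, hIndep1⟩ := transfer_back s t a b hab' e₀ he₀ F hIndep2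
        have hTc : (insert e₀ F).card = Fintype.card {c : V // c ≠ b} := by
          rw [Finset.card_insert_of_notMem he₀F]
          omega
        have hli1 : LinearIndependent ℝ (fun e : ↥(insert e₀ F) => X1 ↑e) :=
          (indepOn_iff _ _).mp hIndep1
        have hsq1 : (rdet X1 (insert e₀ F)) ^ 2 = 1 :=
          (rdet_sq_one_iff X1 _ hTc (htuX1 _)).mpr hli1
        have hST : IsSpanningTree s t (insert e₀ F) :=
          (spanningTree_iff s t b _).mpr ⟨hTc, hsq1⟩
        exact ⟨insert e₀ F, Finset.mem_filter.mpr ⟨Finset.mem_univ _, hST,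
          Finset.mem_insert_self e₀ F⟩, Finset.erase_insert he₀F⟩
    have hNnum : (Nat.card {T : Finset E // IsSpanningTree s t T ∧ e₀ ∈ T})
        = (Finset.univ.filter (fun T : Finset E => IsSpanningTree s t T ∧ e₀ ∈ T)).card := by
      rw [Nat.card_eq_fintype_card]
      exact Fintype.card_subtype _
    have hfinal : A.det * (v a - v b) = (X2ᵀ * X2).det := by
      rw [hdet1, hmind, hminor]
    rw [hdetA, hdetM] at hfinal
    rw [hNnum, hNden, hbijcard]
    have hne : ((Finset.univ.filter (fun T : Finset E => IsSpanningTree s t T)).card : ℝ)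
        ≠ 0 := Nat.cast_ne_zero.mpr hNpos.ne'
    rw [eq_div_iff hne]
    linarith [hfinal]
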